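/- In the mode algebra with generators a_m (m ∈ ℤ) for a in a symplectic vector space, define for x > 0 the operators ξ^{1/2}(a_m) = Σ_{k≥0} binom(1/2, k) x^{1/2−k} a_{m+k}. Then [ξ^{1/2}(a_m), ξ^{1/2}(b_n)] = (a,b)·x^{m+n+1}·( m·δ_{m+n,0} + (m+1/2)·δ_{m+n+1,0} )·K, i.e., the combinatorial identity Σ_{k,l≥0} binom(1/2,k) binom(1/2,l) (m+k) δ_{m+n+k+l,0} = m·δ_{m+n,0} + (m+1/2)·δ_{m+n+1,0} holds for all integers m, n. -/

import Mathlib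

/-- The generalized binomial coefficient `binom(x, k) = x(x−1)⋯(x−k+1)/k!`. -/
noncomputable def gbinom (x : ℝ) (k : ℕ) : ℝ :=
  (∏ i ∈ Finset.range k, (x - i)) / (Nat.factorial k)

lemma desc_smeval (x : ℝ) (k : ℕ) :
    (descPochhammer ℤ k).smeval x = ∏ i ∈ Finset.range k, (x - i) := by
  induction k with
  | zero => simp [descPochhammer]
  | succ k ih =>
    rw [descPochhammer_succ_right, Polynomial.smeval_mul, ih, Finset.prod_range_succ]
    congr 1
    simp [Polynomial.smeval_sub, Polynomial.smeval_X, Polynomial.smeval_natCast]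

lemma gbinom_eq_choose (x : ℝ) (k : ℕ) : gbinom x k = Ring.choose x k := by
  have h := Ring.descPochhammer_eq_factorial_smul_choose (R := ℝ) x k
  rw [desc_smeval] at h
  have hk : (Nat.factorial k : ℝ) ≠ 0 := Nat.cast_ne_zero.mpr (Nat.factorial_ne_zero k)
  rw [gbinom, h, nsmul_eq_mul, mul_div_cancel_left₀ _ hk]

lemma gbinom_nat (n k : ℕ) : gbinom (n : ℝ) k = Nat.choose n k := by
  rw [gbinom_eq_choose, Ring.choose_natCast]

lemma vandermonde (x y : ℝ) (N : ℕ) :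
    ∑ k ∈ Finset.range (N + 1), gbinom x k * gbinom y (N - k) = gbinom (x + y) N := by
  simp only [gbinom_eq_choose]
  rw [Ring.add_choose_eq N (Commute.all x y),
    Finset.Nat.sum_antidiagonal_eq_sum_range_succ_mk]

lemma gbinom_absorb (x : ℝ) (k : ℕ) :
    ((k : ℝ) + 1) * gbinom x (k + 1) = x * gbinom (x - 1) k := by
  have hk : (Nat.factorial k : ℝ) ≠ 0 := Nat.cast_ne_zero.mpr (Nat.factorial_ne_zero k)
  have hp : ∏ i ∈ Finset.range (k + 1), (x - i) =
      (∏ i ∈ Finset.range k, (x - 1 - i)) * x := by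
    rw [Finset.prod_range_succ']
    simp [sub_sub, add_comm]
  rw [gbinom, gbinom, hp, Nat.factorial_succ]
  push_cast
  field_simp

lemma gbinom_one_eval (N : ℕ) :
    gbinom (1 : ℝ) N = (if N = 0 then 1 else 0) + (if N = 1 then 1 else 0) := by
  have : ((1 : ℕ) : ℝ) = (1 : ℝ) := by norm_num
  rw [← this, gbinom_nat]
  match N with
  | 0 => simp
  | 1 => simp
  | (M + 2) => rw [Nat.choose_eq_zero_of_lt (by omega)]; simp

lemma gbinom_zero_eval (N : ℕ) : gbinom (0 : ℝ) N = if N = 0 then 1 else 0 := by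
  have : ((0 : ℕ) : ℝ) = (0 : ℝ) := by norm_num
  rw [← this, gbinom_nat]
  match N with
  | 0 => simp
  | (M + 1) => rw [Nat.choose_eq_zero_of_lt (by omega)]; simp

lemma weighted_sum (N : ℕ) :
    ∑ k ∈ Finset.range (N + 1), (k : ℝ) * gbinom (1/2) k * gbinom (1/2) (N - k)
      = if N = 1 then 1/2 else 0 := by
  match N with
  | 0 => simp
  | (M + 1) =>
    rw [Finset.sum_range_succ']
    simp only [Nat.cast_zero, zero_mul, add_zero]
    have step : ∀ j ∈ Finset.range (M + 1),
        ((j + 1 : ℕ) : ℝ) * gbinom (1/2) (j + 1) * gbinom (1/2) (M + 1 - (j + 1))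
        = (1/2) * (gbinom (-(1/2)) j * gbinom (1/2) (M - j)) := by
      intro j _
      have h1 : (1/2 : ℝ) - 1 = -(1/2) := by norm_num
      have h2 : M + 1 - (j + 1) = M - j := by omega
      push_cast
      rw [gbinom_absorb, h1]; ring
    calc ∑ j ∈ Finset.range (M + 1),
          ((j + 1 : ℕ) : ℝ) * gbinom (1/2) (j + 1) * gbinom (1/2) (M + 1 - (j + 1))
        = ∑ j ∈ Finset.range (M + 1),
          (1/2) * (gbinom (-(1/2)) j * gbinom (1/2) (M - j)) := Finset.sum_congr rfl step
      _ = (1/2) * ∑ j ∈ Finset.range (M + 1), gbinom (-(1/2)) j * gbinom (1/2) (M - j) := by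
          rw [Finset.mul_sum]
      _ = (1/2) * gbinom (-(1/2) + 1/2) M := by rw [vandermonde]
      _ = if M + 1 = 1 then 1/2 else 0 := by
          rw [neg_add_cancel, gbinom_zero_eval]
          by_cases h : M = 0 <;> simp [h]

lemma finite_sum (m : ℤ) (N : ℕ) :
    ∑ k ∈ Finset.range (N + 1), gbinom (1/2) k * gbinom (1/2) (N - k) * ((m : ℝ) + k)
      = (m : ℝ) * (if N = 0 then 1 else 0) +
        ((m : ℝ) + 1/2) * (if N = 1 then 1 else 0) := by
  have expand : ∀ k ∈ Finset.range (N + 1),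
      gbinom (1/2) k * gbinom (1/2) (N - k) * ((m : ℝ) + k)
      = (m : ℝ) * (gbinom (1/2) k * gbinom (1/2) (N - k))
        + (k : ℝ) * gbinom (1/2) k * gbinom (1/2) (N - k) := by intro k _; ring
  rw [Finset.sum_congr rfl expand, Finset.sum_add_distrib, ← Finset.mul_sum,
    vandermonde, weighted_sum]
  have h : (1/2 : ℝ) + 1/2 = 1 := by norm_num
  rw [h, gbinom_one_eval]
  by_cases h0 : N = 0
  · simp [h0]
  · by_cases h1 : N = 1 <;> simp [h0, h1]


/-- The combinatorial identity underlying
`[ξ^{1/2}(a_m), ξ^{1/2}(b_n)] = (a,b)·x^{m+n+1}·(m·δ_{m+n,0} + (m+1/2)·δ_{m+n+1,0})·K`: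
for all integers `m, n`,
`Σ_{k,l≥0} binom(1/2,k)·binom(1/2,l)·(m+k)·δ_{m+n+k+l,0}
  = m·δ_{m+n,0} + (m+1/2)·δ_{m+n+1,0}`. -/
theorem stmt10 (m n : ℤ) :
    (∑' k : ℕ, ∑' l : ℕ,
        gbinom (1 / 2) k * gbinom (1 / 2) l * ((m : ℝ) + k) *
          (if m + n + k + l = 0 then (1 : ℝ) else 0))
      = (m : ℝ) * (if m + n = 0 then 1 else 0) +
        ((m : ℝ) + 1 / 2) * (if m + n + 1 = 0 then 1 else 0) := by
  by_cases hpos : 0 < m + n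
  · have hz : ∀ k l : ℕ, gbinom (1 / 2) k * gbinom (1 / 2) l * ((m : ℝ) + k) *
        (if m + n + k + l = 0 then (1 : ℝ) else 0) = 0 := by
      intro k l; rw [if_neg (by omega), mul_zero]
    simp only [hz, tsum_zero]
    rw [if_neg (by omega), if_neg (by omega)]; ring
  · push_neg at hpos
    set N := (-(m + n)).toNat with hNdef
    have hN : (N : ℤ) = -(m + n) := Int.toNat_of_nonneg (by omega)
    have inner : ∀ k : ℕ,
        (∑' l : ℕ, gbinom (1 / 2) k * gbinom (1 / 2) l * ((m : ℝ) + k) *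
          (if m + n + k + l = 0 then (1 : ℝ) else 0))
        = if k ≤ N then gbinom (1 / 2) k * gbinom (1 / 2) (N - k) * ((m : ℝ) + k) else 0 := by
      intro k
      by_cases hk : k ≤ N
      · rw [if_pos hk, tsum_eq_single (N - k) (fun l hl => by rw [if_neg (by omega), mul_zero]),
          if_pos (by omega), mul_one]
      · rw [if_neg hk]
        have hz : ∀ l : ℕ, gbinom (1 / 2) k * gbinom (1 / 2) l * ((m : ℝ) + k) *
            (if m + n + k + l = 0 then (1 : ℝ) else 0) = 0 := by
          intro l; rw [if_neg (by omega), mul_zero]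
        simp only [hz, tsum_zero]
    rw [tsum_congr inner,
      tsum_eq_sum (s := Finset.range (N + 1))
        (fun k hk => if_neg (by simp only [Finset.mem_range] at hk; omega))]
    have hsum : ∑ k ∈ Finset.range (N + 1),
        (if k ≤ N then gbinom (1 / 2) k * gbinom (1 / 2) (N - k) * ((m : ℝ) + k) else 0)
        = ∑ k ∈ Finset.range (N + 1),
          gbinom (1 / 2) k * gbinom (1 / 2) (N - k) * ((m : ℝ) + k) := by
      refine Finset.sum_congr rfl fun k hk => ?_
      rw [if_pos (by simp only [Finset.mem_range] at hk; omega)]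
    rw [hsum, finite_sum m N]
    have e0 : (N = 0) ↔ (m + n = 0) := by omega
    have e1 : (N = 1) ↔ (m + n + 1 = 0) := by omega
    rw [if_congr e0 rfl rfl, if_congr e1 rfl rfl]
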